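/- Let G and H be nonempty finite simple graphs. Then the Cartesian product G □ H is s-trivial if and only if both G and H are s-trivial. -/

import Mathlib

/-- The interval `I(u,v)`: vertices lying on some shortest `u,v`-path. -/
def SimpleGraph.interval {V : Type*} (G : SimpleGraph V) (u v : V) : Set V :=
  {x | ∃ p : G.Walk u v, p.IsPath ∧ p.length = G.dist u v ∧ x ∈ p.support}

/-- The stress interval `S(u,v)`: vertices lying on every shortest `u,v`-path
(empty if `u` and `v` are in different components). -/
def SimpleGraph.stressInterval {V : Type*} (G : SimpleGraph V) (u v : V) : Set V :=
  {x | G.Reachable u v ∧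
    ∀ p : G.Walk u v, p.IsPath → p.length = G.dist u v → x ∈ p.support}

/-- A set of vertices is stress convex if it contains the stress interval
between any two of its elements. -/
def SimpleGraph.IsStressConvex {V : Type*} (G : SimpleGraph V) (U : Set V) : Prop :=
  ∀ ⦃u⦄, u ∈ U → ∀ ⦃v⦄, v ∈ U → G.stressInterval u v ⊆ U

/-- `G` is s-trivial if every stress interval is contained in its endpoints. -/
def SimpleGraph.STrivial {V : Type*} (G : SimpleGraph V) : Prop :=
  ∀ u v : V, G.stressInterval u v ⊆ {u, v}

namespace SimpleGraph

variable {α β : Type*} {G : SimpleGraph α} {H : SimpleGraph β}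

set_option linter.unusedSectionVars false

section proj
variable [DecidableEq α] [DecidableEq β] [DecidableRel G.Adj] [DecidableRel H.Adj]

lemma proj_length_add {x y : α × β} (w : (G □ H).Walk x y) :
    w.ofBoxProdLeft.length + w.ofBoxProdRight.length = w.length := by
  induction w with
  | nil => rfl
  | @cons x b y h p ih =>
    obtain ⟨x1, x2⟩ := x
    obtain ⟨b1, b2⟩ := b
    rcases h with ⟨hG, he⟩ | ⟨hH, he⟩
    · dsimp at he hG; subst he
      unfold Walk.ofBoxProdLeft Walk.ofBoxProdRight
      rw [Or.by_cases, Or.by_cases,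
        dif_pos ⟨hG, rfl⟩, dif_neg (by simp)]
      show p.ofBoxProdLeft.length + 1 + p.ofBoxProdRight.length = p.length + 1
      omega
    · dsimp at he hH; subst he
      unfold Walk.ofBoxProdLeft Walk.ofBoxProdRight
      rw [Or.by_cases, Or.by_cases,
        dif_neg (by simp), dif_pos ⟨hH, rfl⟩]
      show p.ofBoxProdLeft.length + (p.ofBoxProdRight.length + 1) = p.length + 1
      omega


lemma mem_proj_support {x y : α × β} (w : (G □ H).Walk x y) {a : α} {b : β}
    (hab : (a, b) ∈ w.support) :
    a ∈ w.ofBoxProdLeft.support ∧ b ∈ w.ofBoxProdRight.support := by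
  induction w with
  | nil =>
    simp only [Walk.support_nil, List.mem_singleton] at hab
    subst hab
    exact ⟨List.mem_singleton_self _, List.mem_singleton_self _⟩
  | @cons x c y h p ih =>
    obtain ⟨x1, x2⟩ := x
    obtain ⟨c1, c2⟩ := c
    rw [Walk.support_cons, List.mem_cons] at hab
    rcases h with ⟨hG, he⟩ | ⟨hH, he⟩
    · dsimp at he hG; subst he
      unfold Walk.ofBoxProdLeft Walk.ofBoxProdRight
      rw [Or.by_cases, Or.by_cases,
        dif_pos ⟨hG, rfl⟩, dif_neg (by simp)]
      show a ∈ x1 :: p.ofBoxProdLeft.support ∧ b ∈ p.ofBoxProdRight.support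
      rcases hab with hab | hab
      · rw [Prod.mk.injEq] at hab
        obtain ⟨rfl, rfl⟩ := hab
        exact ⟨by simp, p.ofBoxProdRight.start_mem_support⟩
      · obtain ⟨h1, h2⟩ := ih hab
        exact ⟨List.mem_cons_of_mem _ h1, h2⟩
    · dsimp at he hH; subst he
      unfold Walk.ofBoxProdLeft Walk.ofBoxProdRight
      rw [Or.by_cases, Or.by_cases,
        dif_neg (by simp), dif_pos ⟨hH, rfl⟩]
      show a ∈ p.ofBoxProdLeft.support ∧ b ∈ x2 :: p.ofBoxProdRight.support
      rcases hab with hab | hab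
      · rw [Prod.mk.injEq] at hab
        obtain ⟨rfl, rfl⟩ := hab
        exact ⟨p.ofBoxProdLeft.start_mem_support, by simp⟩
      · obtain ⟨h1, h2⟩ := ih hab
        exact ⟨h1, List.mem_cons_of_mem _ h2⟩

lemma exists_of_mem_projL {x y : α × β} (w : (G □ H).Walk x y) {a : α}
    (ha : a ∈ w.ofBoxProdLeft.support) : ∃ b, (a, b) ∈ w.support := by
  induction w with
  | nil =>
    rename_i u
    obtain ⟨u1, u2⟩ := u
    simp only [Walk.ofBoxProdLeft, Walk.support_nil, List.mem_singleton] at ha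
    exact ⟨u2, by simp [ha]⟩
  | @cons x c y h p ih =>
    obtain ⟨x1, x2⟩ := x
    obtain ⟨c1, c2⟩ := c
    rcases h with ⟨hG, he⟩ | ⟨hH, he⟩
    · dsimp at he hG; subst he
      unfold Walk.ofBoxProdLeft at ha
      rw [Or.by_cases, dif_pos ⟨hG, rfl⟩] at ha
      replace ha : a ∈ x1 :: p.ofBoxProdLeft.support := ha
      rw [List.mem_cons] at ha
      rcases ha with ha | ha
      · exact ⟨x2, by subst ha; simp⟩
      · obtain ⟨b, hb⟩ := ih ha
        exact ⟨b, List.mem_cons_of_mem _ hb⟩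
    · dsimp at he hH; subst he
      unfold Walk.ofBoxProdLeft at ha
      rw [Or.by_cases, dif_neg (by simp)] at ha
      replace ha : a ∈ p.ofBoxProdLeft.support := ha
      obtain ⟨b, hb⟩ := ih ha
      exact ⟨b, List.mem_cons_of_mem _ hb⟩

lemma exists_of_mem_projR {x y : α × β} (w : (G □ H).Walk x y) {b : β}
    (hb : b ∈ w.ofBoxProdRight.support) : ∃ a, (a, b) ∈ w.support := by
  induction w with
  | nil =>
    rename_i u
    obtain ⟨u1, u2⟩ := u
    simp only [Walk.ofBoxProdRight, Walk.support_nil, List.mem_singleton] at hb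
    exact ⟨u1, by simp [hb]⟩
  | @cons x c y h p ih =>
    obtain ⟨x1, x2⟩ := x
    obtain ⟨c1, c2⟩ := c
    rcases h with ⟨hG, he⟩ | ⟨hH, he⟩
    · dsimp at he hG; subst he
      unfold Walk.ofBoxProdRight at hb
      rw [Or.by_cases, dif_neg (by simp)] at hb
      replace hb : b ∈ p.ofBoxProdRight.support := hb
      obtain ⟨a, ha⟩ := ih hb
      exact ⟨a, List.mem_cons_of_mem _ ha⟩
    · dsimp at he hH; subst he
      unfold Walk.ofBoxProdRight at hb
      rw [Or.by_cases, dif_pos ⟨hH, rfl⟩] at hb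
      replace hb : b ∈ x2 :: p.ofBoxProdRight.support := hb
      rw [List.mem_cons] at hb
      rcases hb with hb | hb
      · exact ⟨x1, by subst hb; simp⟩
      · obtain ⟨a, ha⟩ := ih hb
        exact ⟨a, List.mem_cons_of_mem _ ha⟩


lemma boxProd_dist_eq {u v : α} {w z : β} (hG : G.Reachable u v) (hH : H.Reachable w z) :
    (G □ H).dist (u, w) (v, z) = G.dist u v + H.dist w z := by
  classical
  refine le_antisymm ?_ ?_
  · obtain ⟨p, hp⟩ := hG.exists_walk_length_eq_dist
    obtain ⟨q, hq⟩ := hH.exists_walk_length_eq_dist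
    have := (G □ H).dist_le ((p.boxProdLeft H w).append (q.boxProdRight G v))
    erw [Walk.length_append, Walk.boxProdLeft, Walk.boxProdRight, Walk.length_map,
      Walk.length_map, hp, hq] at this
    exact this
  · have hr : (G □ H).Reachable (u, w) (v, z) := by
      obtain ⟨p⟩ := hG
      obtain ⟨q⟩ := hH
      exact ⟨(p.boxProdLeft H w).append (q.boxProdRight G v)⟩
    obtain ⟨r, hr'⟩ := hr.exists_walk_length_eq_dist
    have h1 : G.dist u v ≤ r.ofBoxProdLeft.length := G.dist_le _
    have h2 : H.dist w z ≤ r.ofBoxProdRight.length := H.dist_le _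
    have h3 := proj_length_add r
    omega

end proj

lemma support_of_length_zero {u v : α} (p : G.Walk u v) (hp : p.length = 0) {a : α}
    (ha : a ∈ p.support) : a = u := by
  cases p with
  | nil => simpa using ha
  | cons h q => simp at hp

/-- the walk `P × {b}` followed by `{v} × Q` is a path when `P` and `Q` are. -/
lemma boxProd_path_LR {u v : α} {w z : β} {P : G.Walk u v} {Q : H.Walk w z}
    (hP : P.IsPath) (hQ : Q.IsPath) :
    ((P.boxProdLeft H w).append (Q.boxProdRight G v)).IsPath := by
  erw [Walk.isPath_def, Walk.support_append, Walk.boxProdLeft, Walk.boxProdRight,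
    Walk.support_map, Walk.support_map, List.nodup_append]
  have hinj1 : Function.Injective fun a : α => ((a, w) : α × β) := fun a b h => congrArg Prod.fst h
  have hinj2 : Function.Injective fun b : β => ((v, b) : α × β) := fun a b h => congrArg Prod.snd h
  have hQtail : w ∉ Q.support.tail := by
    have := hQ.support_nodup
    rw [Q.support_eq_cons] at this
    exact (List.nodup_cons.mp this).1
  refine ⟨(hP.support_nodup).map hinj1, ?_, ?_⟩
  · rw [← List.map_tail]
    exact List.Nodup.sublist ((List.tail_sublist _).map _) ((hQ.support_nodup).map hinj2)
  · intro ab h1 c h2 hac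
    subst hac
    rw [← List.map_tail] at h2
    obtain ⟨a, _, rfl⟩ := List.mem_map.mp h1
    obtain ⟨b, hb, hEq⟩ := List.mem_map.mp h2
    exact hQtail ((show b = w from congrArg Prod.snd hEq) ▸ hb)

lemma boxProd_path_RL {u v : α} {w z : β} {P : G.Walk u v} {Q : H.Walk w z}
    (hP : P.IsPath) (hQ : Q.IsPath) :
    ((Q.boxProdRight G u).append (P.boxProdLeft H z)).IsPath := by
  erw [Walk.isPath_def, Walk.support_append, Walk.boxProdLeft, Walk.boxProdRight,
    Walk.support_map, Walk.support_map, List.nodup_append]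
  have hinj1 : Function.Injective fun a : α => ((a, z) : α × β) := fun a b h => congrArg Prod.fst h
  have hinj2 : Function.Injective fun b : β => ((u, b) : α × β) := fun a b h => congrArg Prod.snd h
  have hPtail : u ∉ P.support.tail := by
    have := hP.support_nodup
    rw [P.support_eq_cons] at this
    exact (List.nodup_cons.mp this).1
  refine ⟨(hQ.support_nodup).map hinj2, ?_, ?_⟩
  · rw [← List.map_tail]
    exact List.Nodup.sublist ((List.tail_sublist _).map _) ((hP.support_nodup).map hinj1)
  · intro ab h1 c h2 hac
    subst hac
    rw [← List.map_tail] at h2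
    obtain ⟨b, _, rfl⟩ := List.mem_map.mp h1
    obtain ⟨a, ha, hEq⟩ := List.mem_map.mp h2
    exact hPtail ((show a = u from congrArg Prod.fst hEq) ▸ ha)

end SimpleGraph

/-- for nonempty finite graphs `G` and `H`, the Cartesian (box) product
`G □ H` is s-trivial iff both `G` and `H` are s-trivial. -/
theorem boxProd_sTrivial_iff {V W : Type*} [Fintype V] [Fintype W]
    [Nonempty V] [Nonempty W] (G : SimpleGraph V) (H : SimpleGraph W) :
    (G.boxProd H).STrivial ↔ (G.STrivial ∧ H.STrivial) := by
  classical
  open SimpleGraph in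
  constructor
  · intro hS
    constructor
    · -- G is s-trivial
      intro u v x hx
      obtain ⟨w⟩ := ‹Nonempty W›
      have hr : (G □ H).Reachable (u, w) (v, w) := by
        obtain ⟨p⟩ := hx.1; exact ⟨p.boxProdLeft H w⟩
      have hd : (G □ H).dist (u, w) (v, w) = G.dist u v := by
        rw [boxProd_dist_eq hx.1 (Reachable.refl w), H.dist_self, add_zero]
      have key : (x, w) ∈ (G □ H).stressInterval (u, w) (v, w) := by
        refine ⟨hr, fun p hp hl => ?_⟩
        have h3 := proj_length_add p
        have h1 : G.dist u v ≤ p.ofBoxProdLeft.length := G.dist_le _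
        have hL : p.ofBoxProdLeft.length = G.dist u v := by omega
        have hR0 : p.ofBoxProdRight.length = 0 := by omega
        have hxL : x ∈ p.ofBoxProdLeft.support :=
          hx.2 _ (p.ofBoxProdLeft.isPath_of_length_eq_dist hL) hL
        obtain ⟨b, hb⟩ := exists_of_mem_projL p hxL
        have hbw : b = w :=
          support_of_length_zero _ hR0 (mem_proj_support p hb).2
        exact hbw ▸ hb
      have := hS _ _ key
      simpa [Prod.ext_iff] using this
    · -- H is s-trivial
      intro w z y hy
      obtain ⟨u⟩ := ‹Nonempty V›
      have hr : (G □ H).Reachable (u, w) (u, z) := by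
        obtain ⟨q⟩ := hy.1; exact ⟨q.boxProdRight G u⟩
      have hd : (G □ H).dist (u, w) (u, z) = H.dist w z := by
        rw [boxProd_dist_eq (Reachable.refl u) hy.1, G.dist_self, zero_add]
      have key : (u, y) ∈ (G □ H).stressInterval (u, w) (u, z) := by
        refine ⟨hr, fun p hp hl => ?_⟩
        have h3 := proj_length_add p
        have h1 : H.dist w z ≤ p.ofBoxProdRight.length := H.dist_le _
        have hL : p.ofBoxProdRight.length = H.dist w z := by omega
        have hR0 : p.ofBoxProdLeft.length = 0 := by omega
        have hyR : y ∈ p.ofBoxProdRight.support :=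
          hy.2 _ (p.ofBoxProdRight.isPath_of_length_eq_dist hL) hL
        obtain ⟨a, ha⟩ := exists_of_mem_projR p hyR
        have hau : a = u :=
          support_of_length_zero _ hR0 (mem_proj_support p ha).1
        exact hau ▸ ha
      have := hS _ _ key
      simpa [Prod.ext_iff] using this
  · rintro ⟨hG, hH⟩ ⟨u, w⟩ ⟨v, z⟩ ⟨x, y⟩ hxy
    obtain ⟨r⟩ := hxy.1
    have rG : G.Reachable u v := ⟨r.ofBoxProdLeft⟩
    have rH : H.Reachable w z := ⟨r.ofBoxProdRight⟩
    obtain ⟨P, hPp, hPl⟩ := rG.exists_path_of_dist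
    obtain ⟨Q, hQp, hQl⟩ := rH.exists_path_of_dist
    have hd := boxProd_dist_eq (G := G) (H := H) rG rH
    by_cases hwz : w = z
    · -- second coordinates agree
      subst hwz
      have main : ∀ (P' : G.Walk u v), P'.IsPath → P'.length = G.dist u v →
          y = w ∧ x ∈ P'.support := by
        intro P' h1 h2
        have hpath : (P'.boxProdLeft H w).IsPath := by
          rw [SimpleGraph.Walk.boxProdLeft]
          exact SimpleGraph.Walk.map_isPath_of_injective
            (fun a b hab => congrArg Prod.fst hab) h1
        have hlen : (P'.boxProdLeft H w).length = (G □ H).dist (u, w) (v, w) := by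
          erw [SimpleGraph.Walk.boxProdLeft, SimpleGraph.Walk.length_map, hd, H.dist_self,
            add_zero, h2]
        have := hxy.2 _ hpath hlen
        erw [SimpleGraph.Walk.boxProdLeft, SimpleGraph.Walk.support_map, List.mem_map] at this
        obtain ⟨a, ha, hEq⟩ := this
        have hax : a = x := congrArg Prod.fst hEq
        have hwy : w = y := congrArg Prod.snd hEq
        exact ⟨hwy.symm, hax ▸ ha⟩
      have hyw : y = w := (main P hPp hPl).1
      have hxS : x ∈ G.stressInterval u v := ⟨rG, fun P' h1 h2 => (main P' h1 h2).2⟩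
      have := hG _ _ hxS
      subst hyw
      simpa [Prod.ext_iff] using this
    by_cases huv : u = v
    · -- first coordinates agree
      subst huv
      have main : ∀ (Q' : H.Walk w z), Q'.IsPath → Q'.length = H.dist w z →
          x = u ∧ y ∈ Q'.support := by
        intro Q' h1 h2
        have hpath : (Q'.boxProdRight G u).IsPath := by
          rw [SimpleGraph.Walk.boxProdRight]
          exact SimpleGraph.Walk.map_isPath_of_injective
            (fun a b hab => congrArg Prod.snd hab) h1
        have hlen : (Q'.boxProdRight G u).length = (G □ H).dist (u, w) (u, z) := by
          erw [SimpleGraph.Walk.boxProdRight, SimpleGraph.Walk.length_map, hd, G.dist_self,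
            zero_add, h2]
        have := hxy.2 _ hpath hlen
        erw [SimpleGraph.Walk.boxProdRight, SimpleGraph.Walk.support_map, List.mem_map] at this
        obtain ⟨b, hb, hEq⟩ := this
        have hby : b = y := congrArg Prod.snd hEq
        have hux : u = x := congrArg Prod.fst hEq
        exact ⟨hux.symm, hby ▸ hb⟩
      have hxu : x = u := (main Q hQp hQl).1
      have hyS : y ∈ H.stressInterval w z := ⟨rH, fun Q' h1 h2 => (main Q' h1 h2).2⟩
      have := hH _ _ hyS
      subst hxu
      simpa [Prod.ext_iff] using this
    · -- generic case
      have hAlen : ((P.boxProdLeft H w).append (Q.boxProdRight G v)).length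
          = (G □ H).dist (u, w) (v, z) := by
        erw [SimpleGraph.Walk.length_append, SimpleGraph.Walk.boxProdLeft,
          SimpleGraph.Walk.boxProdRight, SimpleGraph.Walk.length_map,
          SimpleGraph.Walk.length_map, hd, hPl, hQl]
      have hBlen : ((Q.boxProdRight G u).append (P.boxProdLeft H z)).length
          = (G □ H).dist (u, w) (v, z) := by
        erw [SimpleGraph.Walk.length_append, SimpleGraph.Walk.boxProdLeft,
          SimpleGraph.Walk.boxProdRight, SimpleGraph.Walk.length_map,
          SimpleGraph.Walk.length_map, hd, hPl, hQl, Nat.add_comm]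
      have hA := hxy.2 _ (boxProd_path_LR hPp hQp) hAlen
      have hB := hxy.2 _ (boxProd_path_RL hPp hQp) hBlen
      rw [SimpleGraph.Walk.mem_support_append_iff] at hA hB
      have hA' : (y = w ∧ x ∈ P.support) ∨ x = v := by
        rcases hA with h | h
        · erw [SimpleGraph.Walk.boxProdLeft, SimpleGraph.Walk.support_map, List.mem_map] at h
          obtain ⟨a, ha, hEq⟩ := h
          exact Or.inl ⟨(congrArg Prod.snd hEq).symm,
            (show a = x from congrArg Prod.fst hEq) ▸ ha⟩
        · erw [SimpleGraph.Walk.boxProdRight, SimpleGraph.Walk.support_map, List.mem_map] at h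
          obtain ⟨b, hb, hEq⟩ := h
          exact Or.inr (congrArg Prod.fst hEq).symm
      have hB' : x = u ∨ y = z := by
        rcases hB with h | h
        · erw [SimpleGraph.Walk.boxProdRight, SimpleGraph.Walk.support_map, List.mem_map] at h
          obtain ⟨b, hb, hEq⟩ := h
          exact Or.inl (congrArg Prod.fst hEq).symm
        · erw [SimpleGraph.Walk.boxProdLeft, SimpleGraph.Walk.support_map, List.mem_map] at h
          obtain ⟨a, ha, hEq⟩ := h
          exact Or.inr (congrArg Prod.snd hEq).symm
      rcases hA' with ⟨h1, _⟩ | h1 <;> rcases hB' with h2 | h2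
      · exact Or.inl (by simp [h1, h2])
      · exact absurd (h1.symm.trans h2) hwz
      · exact absurd (h2.symm.trans h1) huv
      · exact Or.inr (by simp [h1, h2])
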